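/- For centered normal distributions P₁ = N(0, σ₁²) and P₂ = N(0, σ₂²) with σ₂ ≤ σ₁, the Wasserstein distance satisfies d_W(P₁, P₂) ≤ √(2/π) · (σ₁² − σ₂²)/σ₂. -/

import Mathlib

open MeasureTheory ProbabilityTheory Real Set
open scoped NNReal ENNReal

noncomputable def stdG : Measure ℝ := gaussianReal 0 1

lemma stdG_repr : stdG = volume.withDensity
    (fun x => ((Real.toNNReal (gaussianPDFReal 0 1 x) : ℝ≥0) : ℝ≥0∞)) := by
  rw [stdG, gaussianReal_of_var_ne_zero 0 one_ne_zero]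
  rfl

lemma meas_pdfnn : Measurable (fun x => Real.toNNReal (gaussianPDFReal 0 1 x)) :=
  (measurable_gaussianPDFReal 0 1).real_toNNReal

lemma integral_stdG (g : ℝ → ℝ) :
    ∫ x, g x ∂stdG = ∫ x, gaussianPDFReal 0 1 x * g x := by
  rw [stdG_repr, integral_withDensity_eq_integral_smul meas_pdfnn g]
  congr 1 with x
  rw [NNReal.smul_def, Real.coe_toNNReal _ (gaussianPDFReal_nonneg 0 1 x), smul_eq_mul]

lemma integrable_stdG_iff (g : ℝ → ℝ) :
    Integrable g stdG ↔ Integrable (fun x => gaussianPDFReal 0 1 x * g x) := by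
  rw [stdG_repr, integrable_withDensity_iff_integrable_smul meas_pdfnn]
  constructor <;> intro h <;> [skip; skip] <;>
  · convert h using 1
    · rfl
    ext x
    rw [NNReal.smul_def, Real.coe_toNNReal _ (gaussianPDFReal_nonneg 0 1 x), smul_eq_mul]

lemma pdf01_eq (x : ℝ) :
    gaussianPDFReal 0 1 x = (Real.sqrt (2 * π))⁻¹ * rexp (-(2⁻¹) * x ^ 2) := by
  simp only [gaussianPDFReal, NNReal.coe_one, mul_one, sub_zero]
  ring_nf

lemma integral_Ioi_xexp : ∫ x in Ioi (0:ℝ), x * rexp (-(2⁻¹) * x ^ 2) = 1 := by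
  have hb : (0:ℝ) < (2⁻¹ : ℂ).re := by norm_num
  have h := integral_mul_cexp_neg_mul_sq hb
  have h2 : ∫ r : ℝ in Ioi 0, (r : ℂ) * Complex.exp (-(2⁻¹:ℂ) * (r : ℂ) ^ 2)
      = ((∫ x in Ioi (0:ℝ), x * rexp (-(2⁻¹) * x ^ 2) : ℝ) : ℂ) := by
    calc ∫ r : ℝ in Ioi 0, (r : ℂ) * Complex.exp (-(2⁻¹:ℂ) * (r : ℂ) ^ 2)
        = ∫ r : ℝ in Ioi 0, ((r * rexp (-(2⁻¹) * r ^ 2) : ℝ) : ℂ) := by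
          congr 1 with x
          push_cast [Complex.ofReal_exp]
          ring_nf
      _ = ((∫ x in Ioi (0:ℝ), x * rexp (-(2⁻¹) * x ^ 2) : ℝ) : ℂ) := integral_ofReal
  rw [h2] at h
  have : ((2:ℂ) * 2⁻¹)⁻¹ = ((1:ℝ):ℂ) := by norm_num
  rw [this] at h
  exact_mod_cast h

lemma integral_abs_exp : ∫ x : ℝ, |x| * rexp (-(2⁻¹) * x ^ 2) = 2 := by
  calc ∫ x : ℝ, |x| * rexp (-(2⁻¹) * x ^ 2)
      = ∫ x : ℝ, |x| * rexp (-(2⁻¹) * |x| ^ 2) := by congr 1 with x; rw [sq_abs]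
    _ = 2 * ∫ x in Ioi (0:ℝ), x * rexp (-(2⁻¹) * x ^ 2) :=
        integral_comp_abs (f := fun t => t * rexp (-(2⁻¹) * t ^ 2))
    _ = 2 := by rw [integral_Ioi_xexp]; norm_num

lemma integrable_xexp : Integrable (fun x : ℝ => |x| * rexp (-(2⁻¹) * x ^ 2)) := by
  have h := (integrable_mul_exp_neg_mul_sq (b := 2⁻¹) (by norm_num)).abs
  convert h using 2 with x
  rw [abs_mul, abs_of_pos (Real.exp_pos _)]

lemma integrable_abs_stdG : Integrable (fun x => |x|) stdG := by
  rw [integrable_stdG_iff]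
  refine (integrable_xexp.const_mul ((Real.sqrt (2 * π))⁻¹)).congr ?_
  filter_upwards with x
  rw [pdf01_eq]; ring

lemma integral_abs_stdG : ∫ x, |x| ∂stdG = Real.sqrt (2 / π) := by
  rw [integral_stdG]
  have : ∀ x : ℝ, gaussianPDFReal 0 1 x * |x|
      = (Real.sqrt (2 * π))⁻¹ * (|x| * rexp (-(2⁻¹) * x ^ 2)) := by
    intro x; rw [pdf01_eq]; ring
  simp_rw [this]
  rw [integral_const_mul, integral_abs_exp]
  have h2 : Real.sqrt (2 * π) = Real.sqrt 2 * Real.sqrt π := Real.sqrt_mul (by norm_num) _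
  have h3 : Real.sqrt (2 / π) = Real.sqrt 2 / Real.sqrt π :=
    Real.sqrt_div' 2 Real.pi_pos.le
  have hπ : (0:ℝ) < Real.sqrt π := Real.sqrt_pos.2 Real.pi_pos
  have h2' : (0:ℝ) < Real.sqrt 2 := Real.sqrt_pos.2 (by norm_num)
  have hsq : Real.sqrt 2 * Real.sqrt 2 = 2 := Real.mul_self_sqrt (by norm_num)
  rw [h2, h3]
  field_simp
  nlinarith [hsq]

instance : IsProbabilityMeasure stdG := instIsProbabilityMeasureGaussianReal 0 1

lemma lip_integrable (h : ℝ → ℝ) (hh : LipschitzWith 1 h) (c : ℝ) :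
    Integrable (fun x => h (c * x)) stdG := by
  have hmeas : AEStronglyMeasurable (fun x => h (c * x)) stdG :=
    (hh.continuous.comp (continuous_const.mul continuous_id)).aestronglyMeasurable
  refine Integrable.mono' ((integrable_const |h 0|).add
    (integrable_abs_stdG.const_mul |c|)) hmeas ?_
  filter_upwards with x
  simp only [Pi.add_apply]
  have := hh.dist_le_mul (c * x) 0
  rw [Real.dist_eq, Real.dist_eq, NNReal.coe_one, one_mul, sub_zero] at this
  calc ‖h (c * x)‖ = |h (c * x)| := rfl
    _ ≤ |h (c * x) - h 0| + |h 0| := by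
        have := abs_sub_abs_le_abs_sub (h (c * x)) (h 0); linarith [abs_nonneg (h 0)]
    _ ≤ |c * x| + |h 0| := by linarith
    _ = |h 0| + |c| * |x| := by rw [abs_mul]; ring

lemma key_map (σ : ℝ) (hσ : 0 < σ) (h : ℝ → ℝ) (hh : LipschitzWith 1 h) :
    ∫ x, h x ∂(gaussianReal 0 (σ ^ 2).toNNReal) = ∫ x, h (σ * x) ∂stdG := by
  have hv : (⟨σ ^ 2, sq_nonneg σ⟩ : ℝ≥0) * 1 = (σ ^ 2).toNNReal := by
    apply NNReal.coe_injective
    simp [Real.coe_toNNReal _ (sq_nonneg σ)]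
    rfl
  have hmap : Measure.map (σ * ·) stdG = gaussianReal 0 (σ ^ 2).toNNReal := by
    rw [stdG, gaussianReal_map_const_mul σ, mul_zero]
    exact congrArg (gaussianReal 0) hv
  rw [← hmap,
    integral_map (measurable_const_mul σ).aemeasurable hh.continuous.aestronglyMeasurable]

theorem wasserstein_centered_gaussians_le
    (σ₁ σ₂ : ℝ) (hσ₂ : 0 < σ₂) (hle : σ₂ ≤ σ₁)
    (W : ℝ)
    (hW : IsLUB {d : ℝ | ∃ h : ℝ → ℝ, LipschitzWith 1 h ∧
        d = |(∫ x, h x ∂(gaussianReal 0 (σ₂ ^ 2).toNNReal))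
             - ∫ x, h x ∂(gaussianReal 0 (σ₁ ^ 2).toNNReal)|} W) :
    W ≤ Real.sqrt (2 / Real.pi) * (σ₁ ^ 2 - σ₂ ^ 2) / σ₂ := by
  have hσ₁ : 0 < σ₁ := lt_of_lt_of_le hσ₂ hle
  refine hW.2 ?_
  rintro d ⟨h, hh, rfl⟩
  rw [key_map σ₂ hσ₂ h hh, key_map σ₁ hσ₁ h hh,
    ← integral_sub (lip_integrable h hh σ₂) (lip_integrable h hh σ₁)]
  have hs : (0:ℝ) ≤ Real.sqrt (2 / π) := Real.sqrt_nonneg _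
  have hbound : |∫ x, (h (σ₂ * x) - h (σ₁ * x)) ∂stdG| ≤ (σ₁ - σ₂) * Real.sqrt (2 / π) := by
    calc |∫ x, (h (σ₂ * x) - h (σ₁ * x)) ∂stdG|
        ≤ ∫ x, |h (σ₂ * x) - h (σ₁ * x)| ∂stdG := by
          simpa [Real.norm_eq_abs] using
            norm_integral_le_integral_norm (fun x => h (σ₂ * x) - h (σ₁ * x)) (μ := stdG)
      _ ≤ ∫ x, (σ₁ - σ₂) * |x| ∂stdG := by
          refine integral_mono
            (((lip_integrable h hh σ₂).sub (lip_integrable h hh σ₁)).abs)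
            (integrable_abs_stdG.const_mul _) (fun x => ?_)
          have hd := hh.dist_le_mul (σ₂ * x) (σ₁ * x)
          rw [Real.dist_eq, Real.dist_eq, NNReal.coe_one, one_mul] at hd
          calc |h (σ₂ * x) - h (σ₁ * x)| ≤ |σ₂ * x - σ₁ * x| := hd
            _ = |σ₂ - σ₁| * |x| := by rw [← sub_mul, abs_mul]
            _ = (σ₁ - σ₂) * |x| := by rw [abs_sub_comm, abs_of_nonneg (by linarith)]
      _ = (σ₁ - σ₂) * Real.sqrt (2 / π) := by
          rw [integral_const_mul, integral_abs_stdG]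
  refine le_trans hbound ?_
  rw [le_div_iff₀ hσ₂]
  nlinarith [mul_nonneg hs (mul_nonneg (sub_nonneg.2 hle) hσ₁.le)]
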